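/- arXiv:1011.6071 — 2 statements merged into one kernel-verified Lean document; each statement's English description precedes it below -/
import Mathlib

section
/- Let α ∈ (0,1) and ν ∈ ℕ with 2ν > 1/(1-α). Then for every x ∈ ℝ and m ∈ ℕ, |K_{α,ν}(x + t_m(x)) - K_{α,ν}(x)| / |t_m(x)| ≥ ((2^{2ν(1-α)} - 2)/(2^{2ν(1-α)} - 1)) · (2^{2ν(1-α)})^m. -/
/-- The sawtooth function: φ(x) = |x| on [-1,1], extended 2-periodically. -/
noncomputable def phi (x : ℝ) : ℝ := |x - 2 * round (x / 2)|


lemma phi_nonneg (x : ℝ) : 0 ≤ phi x := abs_nonneg _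

lemma phi_eq (x : ℝ) : phi x = 2 * |x/2 - round (x/2)| := by
  rw [phi, show x - 2*(round (x/2):ℝ) = 2*(x/2 - round (x/2)) by ring, abs_mul, abs_two]

lemma phi_le_one (x : ℝ) : phi x ≤ 1 := by
  have h := abs_sub_round (x / 2)
  rw [phi_eq]; linarith

lemma phi_add_two_int (x : ℝ) (n : ℤ) : phi (x + 2 * n) = phi x := by
  unfold phi
  have : (x + 2*n)/2 = x/2 + n := by ring
  rw [this, round_add_intCast]
  push_cast
  ring_nf

lemma round_min (x : ℝ) (n : ℤ) : |x - round x| ≤ |x - n| := by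
  rcases eq_or_ne n (round x) with h | h
  · rw [h]
  · have h1 : (1:ℝ) ≤ |(round x : ℝ) - n| := by
      have : round x - n ≠ 0 := sub_ne_zero.mpr (Ne.symm h)
      exact_mod_cast Int.one_le_abs this
    have h2 := abs_sub_round x
    have h3 : |(round x : ℝ) - n| ≤ |x - round x| + |x - n| := by
      have e : (round x:ℝ) - n = (x - n) - (x - round x) := by ring
      rw [e]
      have := abs_sub (x - n) (x - (round x:ℝ))
      linarith
    linarith

lemma phi_lipschitz (a b : ℝ) : |phi a - phi b| ≤ |a - b| := by
  have key : ∀ u v : ℝ, phi u - phi v ≤ |u - v| := by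
    intro u v
    have h1 : phi u ≤ |u - 2 * round (v/2)| := by
      have := round_min (u/2) (round (v/2))
      rw [phi_eq, show u - 2*(round (v/2):ℝ) = 2*(u/2 - round (v/2)) by ring, abs_mul,
        abs_two]
      linarith
    have h2 : |u - 2 * round (v/2)| ≤ |u - v| + phi v := by
      calc |u - 2 * round (v/2)| = |(u - v) + (v - 2*round (v/2))| := by ring_nf
        _ ≤ |u - v| + |v - 2*round (v/2)| := abs_add_le _ _
        _ = |u - v| + phi v := rfl
    linarith
  rw [abs_sub_le_iff]
  exact ⟨key a b, (key b a).trans_eq (abs_sub_comm b a)⟩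

lemma phi_of_mem_12 (z : ℝ) (h1 : 1 ≤ z) (h2 : z ≤ 2) : phi z = 2 - z := by
  have hr : round (z/2) = 1 := by
    rw [round_eq, Int.floor_eq_iff]
    constructor <;> push_cast <;> linarith
  rw [phi, hr]
  push_cast
  rw [abs_of_nonpos (by linarith)]
  ring

lemma phi_of_mem_01 (z : ℝ) (h0 : 0 ≤ z) (h1 : z ≤ 1) : phi z = z := by
  rcases lt_or_eq_of_le h1 with h | h
  · have hr : round (z/2) = 0 := by
      rw [round_eq, Int.floor_eq_iff]
      constructor <;> push_cast <;> linarith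
    rw [phi, hr]
    push_cast
    rw [abs_of_nonneg (by linarith)]
    ring
  · rw [h, phi_of_mem_12 1 (le_refl 1) (by norm_num)]; norm_num

lemma phi_interval (n : ℤ) (y : ℝ) (h1 : (n:ℝ) ≤ y) (h2 : y ≤ n+1) :
    phi y = if Even n then y - n else (n:ℝ)+1 - y := by
  rcases Int.even_or_odd n with ⟨j, hj⟩ | ⟨j, hj⟩
  · have hn : Even n := ⟨j, hj⟩
    rw [if_pos hn]
    have hy : y = (y - 2*j) + 2*j := by ring
    rw [hy, phi_add_two_int, phi_of_mem_01 (y - 2*j)]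
    · subst hj; push_cast; ring
    · subst hj; push_cast at h1 ⊢; linarith
    · subst hj; push_cast at h2 ⊢; linarith
  · have hn : ¬ Even n := by
      subst hj; simp [Int.even_add_one, parity_simps]
    rw [if_neg hn]
    have hy : y = (y - 2*j) + 2*j := by ring
    rw [hy, phi_add_two_int, phi_of_mem_12 (y - 2*j)]
    · subst hj; push_cast; ring
    · subst hj; push_cast at h1 ⊢; linarith
    · subst hj; push_cast at h2 ⊢; linarith

lemma phi_abs_diff (n : ℤ) (a b : ℝ) (ha1 : (n:ℝ) ≤ a) (ha2 : a ≤ n+1)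
    (hb1 : (n:ℝ) ≤ b) (hb2 : b ≤ n+1) : |phi b - phi a| = |b - a| := by
  rw [phi_interval n a ha1 ha2, phi_interval n b hb1 hb2]
  split_ifs
  · ring_nf
  · rw [show (n:ℝ)+1-b - ((n:ℝ)+1-a) = -(b-a) by ring, abs_neg]

lemma phi_half_step (y : ℝ) :
    |phi (y + (if Int.fract y ∈ Set.Ioc (0:ℝ) (1/2) then (1/2:ℝ) else -(1/2))) - phi y|
      = 1/2 := by
  have hfl : (⌊y⌋ : ℝ) ≤ y := Int.floor_le y
  have hfr : y < ⌊y⌋ + 1 := Int.lt_floor_add_one y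
  have hfract : Int.fract y = y - ⌊y⌋ := rfl
  split_ifs with h
  · obtain ⟨h1, h2⟩ := h
    rw [hfract] at h1 h2
    rw [phi_abs_diff ⌊y⌋ y (y + 1/2) hfl (by linarith) (by linarith) (by linarith)]
    norm_num
  · rw [Set.mem_Ioc, not_and_or, not_lt, not_le] at h
    rcases h with h | h
    · have h0 : Int.fract y = 0 := le_antisymm h (Int.fract_nonneg y)
      rw [hfract] at h0
      have : ((⌊y⌋ - 1 : ℤ) : ℝ) ≤ y - 1/2 := by push_cast; linarith
      rw [phi_abs_diff (⌊y⌋ - 1) y (y + -(1/2)) (by push_cast; linarith)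
        (by push_cast; linarith) (by push_cast; linarith) (by push_cast; linarith)]
      norm_num
    · rw [hfract] at h
      rw [phi_abs_diff ⌊y⌋ y (y + -(1/2)) hfl (by linarith) (by linarith) (by linarith)]
      norm_num

/-- The Knopp-type function K_{α,ν}. -/
noncomputable def Kfun (α : ℝ) (ν : ℕ) (x : ℝ) : ℝ :=
  ∑' k : ℕ, (2 : ℝ) ^ (-(2 * α * (ν : ℝ) * (k : ℝ))) * phi ((2 : ℝ) ^ (2 * ν * k) * x)

/-- The step function t_m: +2^{-2νm-1} if fract(2^{2νm}x) ∈ (0,1/2], else -2^{-2νm-1}. -/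
noncomputable def tstep (ν m : ℕ) (x : ℝ) : ℝ :=
  if Int.fract ((2 : ℝ) ^ (2 * ν * m) * x) ∈ Set.Ioc (0 : ℝ) (1 / 2)
  then (2 : ℝ) ^ (-(2 * (ν : ℤ) * (m : ℤ) + 1))
  else -(2 : ℝ) ^ (-(2 * (ν : ℤ) * (m : ℤ) + 1))

theorem Kfun_difference_quotient_lower_bound (α : ℝ) (ν : ℕ)
    (hα : α ∈ Set.Ioo (0 : ℝ) 1) (hν : 1 / (1 - α) < 2 * (ν : ℝ)) (x : ℝ) (m : ℕ) :
    |Kfun α ν (x + tstep ν m x) - Kfun α ν x| / |tstep ν m x| ≥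
      ((2 : ℝ) ^ (2 * (ν : ℝ) * (1 - α)) - 2) / ((2 : ℝ) ^ (2 * (ν : ℝ) * (1 - α)) - 1)
        * ((2 : ℝ) ^ (2 * (ν : ℝ) * (1 - α))) ^ m := by
  obtain ⟨hα0, hα1⟩ := hα
  have hepos : (0:ℝ) < 1 - α := by linarith
  have hb1 : (1:ℝ) < 2 * (ν:ℝ) * (1 - α) := by
    have := (div_lt_iff₀ hepos).mp hν
    linarith
  set b : ℝ := (2 : ℝ) ^ (2 * (ν : ℝ) * (1 - α)) with hbdef
  have hbgt : (2:ℝ) < b := by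
    calc (2:ℝ) = 2 ^ (1:ℝ) := (Real.rpow_one 2).symm
      _ < b := Real.rpow_lt_rpow_of_exponent_lt one_lt_two hb1
  have hbpos : (0:ℝ) < b := by linarith
  have hν1 : 1 ≤ ν := by
    by_contra h
    push_neg at h
    interval_cases ν
    · simp at hν
      have : (1:ℝ) < 1/(1-α) := by
        rw [lt_div_iff₀ hepos]; linarith
      linarith
  -- the c coefficients
  set c : ℕ → ℝ := fun k => (2 : ℝ) ^ (-(2 * α * (ν : ℝ) * (k : ℝ))) with hcdef
  have hcpos : ∀ k, 0 < c k := fun k => Real.rpow_pos_of_pos two_pos _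
  have hcb : ∀ k : ℕ, c k * (2:ℝ) ^ (2 * ν * k) = b ^ k := by
    intro k
    simp only [hcdef]
    have h1 : ((2:ℝ) ^ (2 * ν * k : ℕ)) = (2:ℝ) ^ ((2 * ν * k : ℕ) : ℝ) := by
      rw [Real.rpow_natCast]
    have h2 : b ^ k = (2:ℝ) ^ ((2 * (ν : ℝ) * (1 - α)) * k) := by
      rw [← Real.rpow_natCast b k, hbdef, ← Real.rpow_mul (le_of_lt two_pos)]
    rw [h1, h2, ← Real.rpow_add two_pos]
    congr 1
    push_cast
    ring
  -- geometric bound on c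
  set r : ℝ := (2:ℝ) ^ (-(2 * α * (ν:ℝ))) with hrdef
  have hr0 : 0 ≤ r := le_of_lt (Real.rpow_pos_of_pos two_pos _)
  have hr1 : r < 1 := by
    apply Real.rpow_lt_one_of_one_lt_of_neg one_lt_two
    have : (0:ℝ) < (ν:ℝ) := by exact_mod_cast Nat.lt_of_lt_of_le Nat.zero_lt_one hν1
    nlinarith
  have hcr : ∀ k, c k = r ^ k := by
    intro k
    simp only [hcdef, hrdef]
    rw [← Real.rpow_natCast ((2:ℝ) ^ (-(2 * α * (ν:ℝ)))) k,
      ← Real.rpow_mul (le_of_lt two_pos)]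
    congr 1
    ring
  -- summability
  have hsum : ∀ u : ℝ, Summable (fun k : ℕ =>
      c k * phi ((2 : ℝ) ^ (2 * ν * k) * u)) := by
    intro u
    apply Summable.of_nonneg_of_le
      (fun k => mul_nonneg (le_of_lt (hcpos k)) (phi_nonneg _))
      (fun k => ?_) (summable_geometric_of_lt_one hr0 hr1)
    calc c k * phi ((2 : ℝ) ^ (2 * ν * k) * u) ≤ c k * 1 := by
          exact mul_le_mul_of_nonneg_left (phi_le_one _) (le_of_lt (hcpos k))
      _ = r ^ k := by rw [mul_one, hcr]
  -- the step
  set t : ℝ := tstep ν m x with htdef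
  set T : ℝ := (2 : ℝ) ^ (-(2 * (ν : ℤ) * (m : ℤ) + 1)) with hTdef
  have hT : (0:ℝ) < T := zpow_pos two_pos _
  have habs_t : |t| = T := by
    rw [htdef, tstep]
    split_ifs
    · exact abs_of_pos hT
    · rw [abs_neg]; exact abs_of_pos hT
  have ht_cases : t = T ∨ t = -T := by
    rw [htdef, tstep]
    split_ifs
    · left; rfl
    · right; rfl
  -- scaling of T
  have hpowT : ∀ k : ℕ, (2:ℝ) ^ (2 * ν * k) * T = (2:ℝ) ^ ((2*ν*k : ℤ) - (2*ν*m+1)) := by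
    intro k
    rw [hTdef, ← zpow_natCast (2:ℝ) (2*ν*k), ← zpow_add₀ (two_ne_zero)]
    congr 1
    all_goals (push_cast; ring)
  have h2T : (2:ℝ) ^ (2 * ν * m) * T = 1/2 := by
    rw [hpowT m]
    norm_num
  -- terms vanish for k > m
  have hvanish : ∀ k : ℕ, k ∉ Finset.range (m+1) →
      c k * phi ((2 : ℝ) ^ (2 * ν * k) * (x + t)) -
      c k * phi ((2 : ℝ) ^ (2 * ν * k) * x) = 0 := by
    intro k hk
    rw [Finset.mem_range, not_lt] at hk
    have he : (1:ℤ) ≤ (2*ν*k : ℤ) - (2*ν*m+1) := by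
      have : (m+1 : ℤ) ≤ k := by exact_mod_cast hk
      have hν' : (1:ℤ) ≤ ν := by exact_mod_cast hν1
      nlinarith
    set e : ℤ := (2*ν*k : ℤ) - (2*ν*m+1) with hedef
    obtain ⟨d, hd⟩ : ∃ d : ℕ, e = d + 1 := by
      refine ⟨(e-1).toNat, ?_⟩
      have := Int.toNat_of_nonneg (by linarith : (0:ℤ) ≤ e - 1)
      omega
    have hsplit : (2:ℝ) ^ (2 * ν * k) * (x + t) = (2:ℝ) ^ (2 * ν * k) * x
        + (2:ℝ) ^ (2 * ν * k) * t := by ring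
    have hpow2 : (2:ℝ) ^ e = 2 * (2:ℝ) ^ (d:ℕ) := by
      rw [hd, zpow_add₀ two_ne_zero, zpow_natCast, zpow_one]
      ring
    rcases ht_cases with h | h
    · rw [hsplit, h, hpowT k, ← hedef, hpow2]
      have : (2:ℝ) ^ (2*ν*k) * x + 2 * (2:ℝ)^(d:ℕ) =
          (2:ℝ) ^ (2*ν*k) * x + 2 * (((2:ℤ)^d : ℤ) : ℝ) := by push_cast; ring
      rw [this, phi_add_two_int, sub_self]
    · rw [hsplit, h, mul_neg, hpowT k, ← hedef, hpow2]
      have : (2:ℝ) ^ (2*ν*k) * x + -(2 * (2:ℝ)^(d:ℕ)) =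
          (2:ℝ) ^ (2*ν*k) * x + 2 * ((-(2:ℤ)^d : ℤ) : ℝ) := by push_cast; ring
      rw [this, phi_add_two_int, sub_self]
  -- difference as finite sum
  have hΔ : Kfun α ν (x + t) - Kfun α ν x =
      ∑ k ∈ Finset.range (m+1),
        (c k * phi ((2 : ℝ) ^ (2 * ν * k) * (x + t)) -
         c k * phi ((2 : ℝ) ^ (2 * ν * k) * x)) := by
    have e1 : Kfun α ν (x + t) = ∑' k : ℕ, c k * phi ((2 : ℝ) ^ (2 * ν * k) * (x + t)) :=
      rfl
    have e2 : Kfun α ν x = ∑' k : ℕ, c k * phi ((2 : ℝ) ^ (2 * ν * k) * x) := rfl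
    rw [e1, e2, ← Summable.tsum_sub (hsum (x+t)) (hsum x)]
    exact tsum_eq_sum hvanish
  -- the m-th term
  have hmain : |c m * phi ((2 : ℝ) ^ (2 * ν * m) * (x + t)) -
      c m * phi ((2 : ℝ) ^ (2 * ν * m) * x)| = b ^ m * T := by
    set y : ℝ := (2:ℝ) ^ (2 * ν * m) * x with hydef
    have hS : (2:ℝ) ^ (2 * ν * m) * (x + t) =
        y + (if Int.fract y ∈ Set.Ioc (0:ℝ) (1/2) then (1/2:ℝ) else -(1/2)) := by
      rw [mul_add, hydef]
      congr 1
      rw [htdef, tstep]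
      split_ifs with h
      · exact h2T
      · rw [mul_neg, h2T]
    rw [hS, ← mul_sub, abs_mul, abs_of_pos (hcpos m), phi_half_step]
    have : c m * (1/2) = c m * ((2:ℝ) ^ (2 * ν * m) * T) := by rw [h2T]
    rw [this, ← mul_assoc, hcb]
  -- small terms bound
  have hsmall : ∀ k : ℕ, |c k * phi ((2 : ℝ) ^ (2 * ν * k) * (x + t)) -
      c k * phi ((2 : ℝ) ^ (2 * ν * k) * x)| ≤ b ^ k * T := by
    intro k
    rw [← mul_sub, abs_mul, abs_of_pos (hcpos k)]
    calc c k * |phi ((2 : ℝ) ^ (2 * ν * k) * (x + t)) - phi ((2 : ℝ) ^ (2 * ν * k) * x)|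
        ≤ c k * |(2 : ℝ) ^ (2 * ν * k) * (x + t) - (2 : ℝ) ^ (2 * ν * k) * x| := by
          exact mul_le_mul_of_nonneg_left (phi_lipschitz _ _) (le_of_lt (hcpos k))
      _ = c k * ((2 : ℝ) ^ (2 * ν * k) * |t|) := by
          rw [show (2 : ℝ) ^ (2*ν*k) * (x + t) - (2 : ℝ) ^ (2*ν*k) * x
              = (2 : ℝ) ^ (2*ν*k) * t by ring, abs_mul, abs_of_pos (by positivity)]
      _ = b ^ k * T := by rw [habs_t, ← mul_assoc, hcb]
  -- lower bound on |ΔK|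
  have hlower : (b ^ m - ∑ k ∈ Finset.range m, b ^ k) * T ≤
      |Kfun α ν (x + t) - Kfun α ν x| := by
    rw [hΔ, Finset.sum_range_succ]
    set S := ∑ k ∈ Finset.range m,
        (c k * phi ((2 : ℝ) ^ (2 * ν * k) * (x + t)) -
         c k * phi ((2 : ℝ) ^ (2 * ν * k) * x)) with hSdef
    set L := c m * phi ((2 : ℝ) ^ (2 * ν * m) * (x + t)) -
         c m * phi ((2 : ℝ) ^ (2 * ν * m) * x) with hLdef
    have h1 : |S| ≤ (∑ k ∈ Finset.range m, b ^ k) * T := by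
      calc |S| ≤ ∑ k ∈ Finset.range m, |c k * phi ((2 : ℝ) ^ (2 * ν * k) * (x + t)) -
            c k * phi ((2 : ℝ) ^ (2 * ν * k) * x)| := Finset.abs_sum_le_sum_abs _ _
        _ ≤ ∑ k ∈ Finset.range m, b ^ k * T := Finset.sum_le_sum (fun k _ => hsmall k)
        _ = (∑ k ∈ Finset.range m, b ^ k) * T := by rw [Finset.sum_mul]
    have h2 : |L| ≤ |S + L| + |S| := by
      calc |L| = |(S + L) - S| := by ring_nf
        _ ≤ |S + L| + |S| := abs_sub _ _
    rw [hmain] at h2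
    have := Finset.sum_mul (Finset.range m) (fun k => b ^ k) T
    rw [sub_mul]
    linarith
  -- conclude
  rw [ge_iff_le, habs_t, le_div_iff₀ hT]
  have hgeom : ∑ k ∈ Finset.range m, b ^ k = (b ^ m - 1) / (b - 1) :=
    geom_sum_eq (by linarith) m
  have hbm1 : (1:ℝ) ≤ b ^ m := one_le_pow₀ (by linarith : (1:ℝ) ≤ b)
  have hkey : (b - 2) / (b - 1) * b ^ m ≤ b ^ m - ∑ k ∈ Finset.range m, b ^ k := by
    rw [hgeom]
    rw [div_mul_eq_mul_div, div_le_iff₀ (by linarith : (0:ℝ) < b - 1)]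
    have : (b ^ m - (b ^ m - 1) / (b - 1)) * (b - 1) = b ^ m * (b-1) - (b ^ m - 1) := by
      rw [sub_mul, div_mul_cancel₀]
      exact ne_of_gt (by linarith)
    rw [this]
    nlinarith [pow_nonneg (le_of_lt hbpos) m]
  calc (b - 2) / (b - 1) * b ^ m * T ≤ (b ^ m - ∑ k ∈ Finset.range m, b ^ k) * T :=
      mul_le_mul_of_nonneg_right hkey (le_of_lt hT)
    _ ≤ _ := hlower
end

section
/- Let α ∈ (0,1) and ν ∈ ℕ with 2ν > 1/(1-α). Then K_{α,ν} is nowhere differentiable: for every x ∈ ℝ, the limit lim_{t→0} (K_{α,ν}(x+t) - K_{α,ν}(x))/t does not exist (indeed the difference quotients are unbounded as t → 0). -/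
lemma two_abs_half (x c : ℝ) : |x - 2*c| = 2 * |x/2 - c| := by
  rw [show x - 2*c = 2*(x/2 - c) by ring, abs_mul, abs_two]

lemma phi_le (x : ℝ) (m : ℤ) : phi x ≤ |x - 2 * m| := by
  unfold phi
  rcases eq_or_ne (round (x/2)) m with h | h
  · rw [h]
  · have h1 : |x/2 - round (x/2)| ≤ 1/2 := abs_sub_round (x/2)
    have h2 : (1:ℝ) ≤ |(round (x/2) : ℝ) - m| := by
      have h' : (1:ℤ) ≤ |round (x/2) - m| := Int.one_le_abs (sub_ne_zero.2 h)
      exact_mod_cast h'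
    have h3 : |x/2 - m| ≥ 1/2 := by
      have htri : |(round (x/2):ℝ) - m| ≤ |(round (x/2):ℝ) - x/2| + |x/2 - m| :=
        abs_sub_le _ _ _
      have hc : |(round (x/2):ℝ) - x/2| = |x/2 - round (x/2)| := abs_sub_comm _ _
      linarith
    rw [two_abs_half, two_abs_half]; linarith

lemma phi_lipschitz_s14 (x y : ℝ) : |phi x - phi y| ≤ |x - y| := by
  rw [abs_sub_le_iff]
  constructor
  · have h1 : phi x ≤ |x - 2 * round (y/2)| := phi_le x _
    have h2 : |x - 2 * (round (y/2):ℝ)| ≤ |x - y| + |y - 2 * round (y/2)| := by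
      have := abs_sub_le x y (2 * (round (y/2):ℝ)); exact this
    have : phi y = |y - 2 * (round (y/2):ℝ)| := rfl
    linarith
  · have h1 : phi y ≤ |y - 2 * round (x/2)| := phi_le y _
    have h2 : |y - 2 * (round (x/2):ℝ)| ≤ |y - x| + |x - 2 * round (x/2)| := by
      exact abs_sub_le y x _
    have : phi x = |x - 2 * (round (x/2):ℝ)| := rfl
    have hc : |y - x| = |x - y| := abs_sub_comm _ _
    have hc2 : |y - 2 * (round (x/2):ℝ)| = |2 * (round (x/2):ℝ) - y| := abs_sub_comm _ _
    linarith

lemma phi_add_int_mul_two (x : ℝ) (m : ℤ) : phi (x + 2*m) = phi x := by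
  unfold phi
  have : (x + 2*m)/2 = x/2 + m := by ring
  rw [this, round_add_intCast]
  push_cast
  ring_nf

lemma phi_eq_even (j : ℤ) (y : ℝ) (h1 : 2*(j:ℝ) ≤ y) (h2 : y ≤ 2*j+1) :
    phi y = y - 2*j := by
  have hle : phi y ≤ y - 2*j := by
    have := phi_le y j
    rwa [abs_of_nonneg (by linarith)] at this
  have hge : y - 2*j ≤ phi y := by
    unfold phi
    set r := round (y/2) with hr
    rcases le_or_gt r j with h | h
    · have : (r:ℝ) ≤ j := by exact_mod_cast h
      have : y - 2*r ≥ y - 2*j := by linarith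
      calc y - 2*j ≤ y - 2*r := this
        _ ≤ |y - 2*r| := le_abs_self _
    · have : (j:ℝ) + 1 ≤ r := by exact_mod_cast h
      have h3 : 2*r - y ≥ y - 2*j := by linarith
      calc y - 2*j ≤ 2*r - y := h3
        _ = -(y - 2*r) := by ring
        _ ≤ |y - 2*r| := neg_le_abs _
  linarith

lemma phi_eq_odd (j : ℤ) (y : ℝ) (h1 : 2*(j:ℝ)+1 ≤ y) (h2 : y ≤ 2*j+2) :
    phi y = 2*j+2 - y := by
  have hle : phi y ≤ 2*j+2 - y := by
    have := phi_le y (j+1)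
    rw [abs_of_nonpos (by push_cast; linarith)] at this
    push_cast at this ⊢; linarith
  have hge : 2*j+2 - y ≤ phi y := by
    unfold phi
    set r := round (y/2) with hr
    rcases le_or_gt r j with h | h
    · have : (r:ℝ) ≤ j := by exact_mod_cast h
      calc 2*(j:ℝ)+2 - y ≤ y - 2*r := by linarith
        _ ≤ |y - 2*r| := le_abs_self _
    · have : (j:ℝ) + 1 ≤ r := by exact_mod_cast h
      calc 2*(j:ℝ)+2 - y ≤ 2*r - y := by linarith
        _ = -(y - 2*r) := by ring
        _ ≤ |y - 2*r| := neg_le_abs _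
  linarith

lemma phi_sub_interval (m : ℤ) (u v : ℝ) (hu1 : (m:ℝ) ≤ u) (hu2 : u ≤ m+1)
    (hv1 : (m:ℝ) ≤ v) (hv2 : v ≤ m+1) : |phi u - phi v| = |u - v| := by
  rcases Int.even_or_odd' m with ⟨j, hj | hj⟩
  · subst hj; push_cast at *
    rw [phi_eq_even j u (by linarith) (by linarith),
        phi_eq_even j v (by linarith) (by linarith)]
    ring_nf
  · subst hj; push_cast at *
    rw [phi_eq_odd j u (by linarith) (by linarith),
        phi_eq_odd j v (by linarith) (by linarith)]
    rw [show 2*(j:ℝ)+2 - u - (2*j+2 - v) = -(u - v) by ring, abs_neg]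

lemma phi_step (u : ℝ) : ∃ ε : ℤ, (ε = 1 ∨ ε = -1) ∧ |phi (u + (ε:ℝ)/2) - phi u| = 1/2 := by
  set m := ⌊u⌋ with hm
  have h1 : (m:ℝ) ≤ u := Int.floor_le u
  have h2 : u < m + 1 := Int.lt_floor_add_one u
  by_cases h : u + 1/2 ≤ m + 1
  · refine ⟨1, Or.inl rfl, ?_⟩
    push_cast
    rw [phi_sub_interval m (u + 1/2) u (by linarith) (by linarith) h1 h2.le]
    rw [show u + 1/2 - u = 1/2 by ring, abs_of_pos]; norm_num
  · refine ⟨-1, Or.inr rfl, ?_⟩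
    push_neg at h
    push_cast
    rw [show u + (-1)/2 = u - 1/2 by ring]
    rw [phi_sub_interval m (u - 1/2) u (by linarith) (by linarith) h1 h2.le]
    rw [show u - 1/2 - u = -(1/2) by ring, abs_neg, abs_of_pos]; norm_num


lemma summable_aux {a : ℝ} (ha0 : 0 ≤ a) (ha1 : a < 1) (f : ℕ → ℝ) :
    Summable (fun k => a^k * phi (f k)) := by
  apply Summable.of_nonneg_of_le
    (fun k => mul_nonneg (pow_nonneg ha0 k) (phi_nonneg _))
    (fun k => ?_) (summable_geometric_of_lt_one ha0 ha1)
  calc a^k * phi (f k) ≤ a^k * 1 :=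
        mul_le_mul_of_nonneg_left (phi_le_one _) (pow_nonneg ha0 k)
    _ = a^k := mul_one _

lemma Kfun_eq (α : ℝ) (ν : ℕ) (y : ℝ) :
    Kfun α ν y = ∑' k : ℕ, ((2:ℝ) ^ (-(2*α*(ν:ℝ))))^k * phi (((2:ℝ)^(2*ν))^k * y) := by
  unfold Kfun
  congr 1; funext k
  rw [← Real.rpow_natCast ((2:ℝ) ^ (-(2*α*(ν:ℝ)))) k, ← Real.rpow_mul (by norm_num),
    pow_mul]
  ring_nf


lemma key (α : ℝ) (ν : ℕ) (hα : α ∈ Set.Ioo (0:ℝ) 1) (hν : 1/(1-α) < 2*(ν:ℝ)) (x : ℝ) :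
    ∀ C > (0:ℝ), ∀ r > (0:ℝ), ∃ t : ℝ, t ≠ 0 ∧ |t| < r ∧
      C < |(Kfun α ν (x+t) - Kfun α ν x)/t| := by
  obtain ⟨hα0, hα1⟩ := hα
  have h1α : 0 < 1 - α := by linarith
  have hd : 1 < 2*(ν:ℝ)*(1-α) := by
    rw [div_lt_iff₀ h1α] at hν; linarith [hν]
  have hν1 : 1 ≤ ν := by
    by_contra h
    push_neg at h
    interval_cases ν
    norm_num at hd
  have hνR : (1:ℝ) ≤ (ν:ℝ) := by exact_mod_cast hν1
  set a : ℝ := (2:ℝ) ^ (-(2*α*(ν:ℝ))) with ha_def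
  set b : ℝ := (2:ℝ) ^ (2*ν) with hb_def
  have ha0 : 0 < a := Real.rpow_pos_of_pos (by norm_num) _
  have ha1 : a < 1 := by
    rw [ha_def]
    apply Real.rpow_lt_one_of_one_lt_of_neg (by norm_num)
    nlinarith
  have hb2 : (2:ℝ) ≤ b := by
    rw [hb_def]
    calc (2:ℝ) = 2^1 := (pow_one 2).symm
      _ ≤ 2^(2*ν) := pow_le_pow_right₀ (by norm_num) (by omega)
  have hb0 : (0:ℝ) < b := by linarith
  set M : ℝ := a * b with hM_def
  have hab : 2 < M := by
    have hb' : b = (2:ℝ) ^ ((2*ν : ℕ):ℝ) := by rw [hb_def, Real.rpow_natCast]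
    rw [hM_def, ha_def, hb', ← Real.rpow_add (by norm_num)]
    calc (2:ℝ) = 2 ^ (1:ℝ) := (Real.rpow_one 2).symm
      _ < _ := by
        apply Real.rpow_lt_rpow_of_exponent_lt (by norm_num)
        push_cast; nlinarith
  have hM0 : (0:ℝ) < M := by linarith
  set c' : ℝ := 1 - 1/(M-1) with hc'_def
  have hc'0 : 0 < c' := by
    rw [hc'_def]
    have : 1/(M-1) < 1 := by rw [div_lt_one (by linarith)]; linarith
    linarith
  clear_value a b M c'
  intro C hC r hr
  obtain ⟨n, hn⟩ := pow_unbounded_of_one_lt (max (C/c') (1/(2*r))) (show (1:ℝ) < M by linarith)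
  have hMn : (0:ℝ) < M^n := pow_pos hM0 n
  have hbn : (0:ℝ) < b^n := pow_pos hb0 n
  have hMb : M^n ≤ b^n := by
    apply pow_le_pow_left₀ hM0.le
    calc M = a*b := hM_def
      _ ≤ 1*b := by nlinarith
      _ = b := one_mul b
  obtain ⟨ε, hε, hstep⟩ := phi_step (b^n * x)
  have hεabs : |(ε:ℝ)| = 1 := by rcases hε with rfl | rfl <;> norm_num
  have hεne : (ε:ℝ) ≠ 0 := by rcases hε with rfl | rfl <;> norm_num
  set t : ℝ := (ε:ℝ)/(2*b^n) with ht_def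
  have htne : t ≠ 0 := div_ne_zero hεne (by positivity)
  have htabs : |t| = 1/(2*b^n) := by
    rw [ht_def, abs_div, hεabs, abs_of_pos (by positivity)]
  refine ⟨t, htne, ?_, ?_⟩
  · rw [htabs]
    have h1 : 1/(2*r) < M^n := lt_of_le_of_lt (le_max_right _ _) hn
    rw [div_lt_iff₀ (by positivity)] at h1 ⊢
    nlinarith
  · -- main estimate
    set g : ℕ → ℝ := fun k => a^k * (phi (b^k * (x+t)) - phi (b^k * x)) with hg_def
    have hKdiff : Kfun α ν (x+t) - Kfun α ν x = ∑' k, g k := by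
      rw [Kfun_eq, Kfun_eq]
      simp only [← ha_def, ← hb_def]
      rw [← Summable.tsum_sub (summable_aux ha0.le ha1 _) (summable_aux ha0.le ha1 _)]
      congr 1; funext k; rw [hg_def]; ring
    have hbk : ∀ k : ℕ, b^k = (2:ℝ)^(2*ν*k) := fun k => by rw [hb_def, ← pow_mul]
    have hvanish : ∀ k ∉ Finset.range (n+1), g k = 0 := by
      intro k hk
      rw [Finset.mem_range, not_lt] at hk
      obtain ⟨m, hm1, rfl⟩ : ∃ m, 1 ≤ m ∧ k = n + m := ⟨k - n, by omega, by omega⟩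
      have hB : 2*1*1 ≤ 2*ν*m := Nat.mul_le_mul (Nat.mul_le_mul_left 2 hν1) hm1
      obtain ⟨E, hE⟩ : ∃ E, 2*ν*m = E + 2 :=
        ⟨2*ν*m - 2, (Nat.sub_add_cancel (by simpa using hB)).symm⟩
      have hexp : 2*ν*(n+m) = (2*ν*n + 1 + 1) + E := by rw [Nat.mul_add, hE]; ring
      have hbt : b^(n+m) * t = 2 * (((ε * 2^E : ℤ)):ℝ) := by
        push_cast
        rw [ht_def, hbk (n+m), hbk n, hexp, pow_add, pow_add, pow_add, pow_one]
        field_simp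
      have hsh : b^(n+m) * (x + t) = b^(n+m) * x + 2 * (((ε * 2^E : ℤ)):ℝ) := by
        rw [mul_add, hbt]
      rw [hg_def]
      simp only
      rw [hsh, phi_add_int_mul_two, sub_self, mul_zero]
    have htsum : ∑' k, g k = ∑ k ∈ Finset.range (n+1), g k := tsum_eq_sum hvanish
    have hgn : |g n| = a^n * (1/2) := by
      have hbnt : b^n * t = (ε:ℝ)/2 := by
        rw [ht_def]; field_simp
      have : b^n * (x + t) = b^n * x + (ε:ℝ)/2 := by rw [mul_add, hbnt]
      rw [hg_def]; simp only
      rw [this, abs_mul, abs_of_pos (pow_pos ha0 n), hstep]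
    have hgk : ∀ k, |g k| ≤ M^k * (1/(2*b^n)) := by
      intro k
      rw [hg_def]; simp only
      rw [abs_mul, abs_of_pos (pow_pos ha0 k)]
      have hlip := phi_lipschitz_s14 (b^k * (x+t)) (b^k * x)
      have : |b^k*(x+t) - b^k*x| = b^k * |t| := by
        rw [show b^k*(x+t) - b^k*x = b^k * t by ring, abs_mul,
          abs_of_pos (pow_pos hb0 k)]
      rw [this, htabs] at hlip
      calc a^k * |phi (b^k*(x+t)) - phi (b^k*x)| ≤ a^k * (b^k * (1/(2*b^n))) :=
            mul_le_mul_of_nonneg_left hlip (pow_pos ha0 k).le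
        _ = M^k * (1/(2*b^n)) := by rw [hM_def, mul_pow]; ring
    have hsum_small : ∑ k ∈ Finset.range n, |g k| ≤ M^n/(M-1) * (1/(2*b^n)) := by
      calc ∑ k ∈ Finset.range n, |g k|
          ≤ ∑ k ∈ Finset.range n, M^k * (1/(2*b^n)) :=
            Finset.sum_le_sum (fun k _ => hgk k)
        _ = (∑ k ∈ Finset.range n, M^k) * (1/(2*b^n)) := by rw [← Finset.sum_mul]
        _ = ((M^n - 1)/(M-1)) * (1/(2*b^n)) := by rw [geom_sum_eq (by linarith) n]
        _ ≤ M^n/(M-1) * (1/(2*b^n)) := by gcongr <;> linarith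
    have hlow : (M^n * c') * (1/(2*b^n)) ≤ |∑' k, g k| := by
      rw [htsum, Finset.sum_range_succ]
      have h3 : |∑ k ∈ Finset.range n, g k| ≤ ∑ k ∈ Finset.range n, |g k| :=
        Finset.abs_sum_le_sum_abs _ _
      have h4 : |g n| ≤ |(∑ k ∈ Finset.range n, g k) + g n| + |∑ k ∈ Finset.range n, g k| := by
        have := abs_sub (((∑ k ∈ Finset.range n, g k) + g n)) (∑ k ∈ Finset.range n, g k)
        calc |g n| = |((∑ k ∈ Finset.range n, g k) + g n) - ∑ k ∈ Finset.range n, g k| := by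
              rw [add_sub_cancel_left]
          _ ≤ _ := abs_sub _ _
      have heq : (M^n * c') * (1/(2*b^n)) = a^n*(1/2) - M^n/(M-1)*(1/(2*b^n)) := by
        have hM1 : M - 1 ≠ 0 := by linarith
        have hbn' : b^n ≠ 0 := ne_of_gt hbn
        have hMeq : M^n = a^n * b^n := by rw [hM_def, mul_pow]
        rw [hc'_def, hMeq]
        field_simp
      rw [heq]
      linarith [hgn, hsum_small, h3, h4]
    rw [hKdiff, abs_div, htabs]
    rw [lt_div_iff₀ (by positivity)]
    have hCc : C < M^n * c' := by
      have h := lt_of_le_of_lt (le_max_left (C/c') (1/(2*r))) hn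
      rw [div_lt_iff₀ hc'0] at h
      exact h
    calc C * (1/(2*b^n)) < (M^n * c') * (1/(2*b^n)) := by
          apply mul_lt_mul_of_pos_right hCc (by positivity)
      _ ≤ |∑' k, g k| := hlow

theorem Kfun_nowhere_differentiable (α : ℝ) (ν : ℕ)
    (hα : α ∈ Set.Ioo (0 : ℝ) 1) (hν : 1 / (1 - α) < 2 * (ν : ℝ)) (x : ℝ) :
    (¬ ∃ L : ℝ, Filter.Tendsto (fun t => (Kfun α ν (x + t) - Kfun α ν x) / t)
        (nhdsWithin 0 {0}ᶜ) (nhds L))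
    ∧ ∀ C > (0 : ℝ), ∀ r > (0 : ℝ), ∃ t : ℝ, t ≠ 0 ∧ |t| < r ∧
        C < |(Kfun α ν (x + t) - Kfun α ν x) / t| := by
  have hkey := key α ν hα hν x
  refine ⟨?_, hkey⟩
  rintro ⟨L, hL⟩
  have h1 : ∀ᶠ t in nhdsWithin (0:ℝ) {0}ᶜ,
      dist ((Kfun α ν (x + t) - Kfun α ν x) / t) L < 1 :=
    (Metric.tendsto_nhds.1 hL) 1 one_pos
  rw [Filter.eventually_iff, Metric.mem_nhdsWithin_iff] at h1
  obtain ⟨δ, hδ0, hδ⟩ := h1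
  obtain ⟨t, htne, htδ, htC⟩ := hkey (|L| + 1) (by positivity) δ hδ0
  have h2 : dist ((Kfun α ν (x + t) - Kfun α ν x) / t) L < 1 := by
    refine hδ ⟨?_, htne⟩
    simpa [Metric.mem_ball, Real.dist_eq, sub_zero] using htδ
  rw [Real.dist_eq] at h2
  have h3 : |(Kfun α ν (x + t) - Kfun α ν x) / t| ≤
      |(Kfun α ν (x + t) - Kfun α ν x) / t - L| + |L| := by
    calc |(Kfun α ν (x + t) - Kfun α ν x) / t|
        = |((Kfun α ν (x + t) - Kfun α ν x) / t - L) + L| := by rw [sub_add_cancel]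
      _ ≤ _ := abs_add_le _ _
  linarith
end
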